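/- Let (S_t) be a centered right-continuous continuous-time random walk with step law ξ (E[ξ_1] = 0, P(ξ_1 ≥ 2) = 0, P(ξ_1 = 1) > 0, ξ_1 not almost surely 0), T = inf{t > 0 : S_t < 0}, H = −S_T the undershoot and L = S_{T−} − S_T the size of the jump at time T. Then for every k ≥ 1: P(H = k) = P(ξ_1 ≤ −k)/P(ξ_1 = 1) and P(L = k) = k·P(ξ_1 = −k)/P(ξ_1 = 1). -/

import Mathlib

open MeasureTheory ProbabilityTheory Filter
open scoped ENNReal Topology

set_option linter.unusedSectionVars false
set_option linter.unusedVariables false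
set_option linter.unreachableTactic false
set_option linter.unusedTactic false
set_option maxHeartbeats 1000000

namespace USJ

noncomputable def tail (p : ℤ → ℝ≥0∞) (t : ℤ) : ℝ≥0∞ := ∑' d : ℕ, p (t - d)

lemma tail_succ (p : ℤ → ℝ≥0∞) (t : ℤ) : tail p (t + 1) = p (t + 1) + tail p t := by
  rw [tail, tsum_eq_zero_add' ENNReal.summable]
  congr 1
  · norm_num
  · rw [tail]
    congr 1
    funext d
    congr 1
    push_cast
    ring

lemma tail_add_nat (p : ℤ → ℝ≥0∞) (t : ℤ) (w : ℕ) :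
    tail p (t + w) = (∑ j ∈ Finset.range w, p (t + w - j)) + tail p t := by
  induction w with
  | zero => simp
  | succ w ih =>
    have h1 : t + ((w : ℤ) + 1) = (t + w) + 1 := by ring
    push_cast
    rw [h1, tail_succ, ih, Finset.sum_range_succ']
    push_cast
    calc p (t + w + 1) + (∑ j ∈ Finset.range w, p (t + ↑w - ↑j) + tail p t)
        = (∑ j ∈ Finset.range w, p (t + ↑w - ↑j) + p (t + w + 1)) + tail p t := by ring
      _ = (∑ j ∈ Finset.range w, p (t + ↑w + 1 - (↑j + 1)) + p (t + ↑w + 1 - 0)) + tail p t := by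
          congr 2
          · exact Finset.sum_congr rfl (fun j _ => by norm_num)
          · norm_num

lemma tail_mono (p : ℤ → ℝ≥0∞) : Monotone (tail p) := by
  intro a b hab
  obtain ⟨w, rfl⟩ : ∃ w : ℕ, b = a + w := ⟨(b - a).toNat, by omega⟩
  rw [tail_add_nat]
  exact le_add_self

def negTailEquiv (t : ℤ) : ℕ ≃ ↥{z : ℤ | z ≤ t} :=
  { toFun := fun d => ⟨t - d, by simp⟩
    invFun := fun z => (t - z.1).toNat
    left_inv := fun d => by change (t - (t - (d:ℤ))).toNat = d; omega
    right_inv := fun z => Subtype.ext (by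
      have h := z.2
      simp only [Set.mem_setOf_eq] at h
      simp only []
      omega) }

def posTailEquiv (t : ℤ) : ℕ ≃ ↥({z : ℤ | z ≤ t}ᶜ) :=
  { toFun := fun d => ⟨t + 1 + d, by simp; omega⟩
    invFun := fun z => (z.1 - t - 1).toNat
    left_inv := fun d => by change (t + 1 + (d:ℤ) - t - 1).toNat = d; omega
    right_inv := fun z => Subtype.ext (by
      have h := z.2
      simp only [Set.mem_compl_iff, Set.mem_setOf_eq, not_le] at h
      simp only []
      omega) }

lemma splitz (p : ℤ → ℝ≥0∞) (t : ℤ) :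
    ∑' z : ℤ, p z = tail p t + ∑' d : ℕ, p (t + 1 + d) := by
  rw [← Summable.tsum_add_tsum_compl (s := {z : ℤ | z ≤ t}) ENNReal.summable ENNReal.summable]
  congr 1
  · rw [tail]
    exact ((negTailEquiv t).tsum_eq (fun z : ↥{z : ℤ | z ≤ t} => p z.1)).symm
  · exact ((posTailEquiv t).tsum_eq (fun z : ↥({z : ℤ | z ≤ t}ᶜ) => p z.1)).symm

lemma tail_le_one (p : ℤ → ℝ≥0∞) (hpsum : ∑' z : ℤ, p z = 1) (t : ℤ) : tail p t ≤ 1 := by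
  rw [← hpsum, splitz p t]; exact le_self_add

lemma tail_ge_one (p : ℤ → ℝ≥0∞) (hpsum : ∑' z : ℤ, p z = 1)
    (hp2 : ∀ z : ℤ, 2 ≤ z → p z = 0) {t : ℤ} (ht : 1 ≤ t) : tail p t = 1 := by
  refine le_antisymm (tail_le_one p hpsum t) ?_
  have h1 : tail p 1 = 1 := by
    have := splitz p 1
    rw [hpsum] at this
    have hz : ∑' d : ℕ, p (1 + 1 + d) = 0 := by
      rw [ENNReal.tsum_eq_zero]
      intro d; exact hp2 _ (by omega)
    rw [hz, add_zero] at this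
    exact this.symm
  rw [← h1]
  exact tail_mono p ht


lemma endgame (p : ℤ → ℝ≥0∞) (v : ℕ → ℝ≥0∞)
    (hpsum : ∑' z : ℤ, p z = 1)
    (hp2 : ∀ z : ℤ, 2 ≤ z → p z = 0)
    (hp1 : p 1 ≠ 0)
    (hq : ∑' i : ℕ, tail p (-1 - i) = p 1)
    (hvle : ∀ j, v j ≤ 1)
    (hvanti : Antitone v)
    (hveq : ∀ j : ℕ, v j = (if j = 0 then p 1 else 0) + ∑' i : ℕ, v i * p ((j:ℤ) - i))
    (hdichot : (∀ j, v j = 1) ∨ Tendsto v atTop (𝓝 0)) :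
    ∀ j, v j = 1 := by
  rcases hdichot with hall | h
  · exact hall
  exfalso
  set q : ℕ → ℝ≥0∞ := fun i => tail p (-1 - i) with hqdef
  have hple : ∀ z : ℤ, p z ≤ 1 := fun z => hpsum ▸ ENNReal.le_tsum z
  have hp1top : p 1 ≠ ⊤ := (lt_of_le_of_lt (hple 1) ENNReal.one_lt_top).ne
  set C : ℕ → ℕ → ℝ≥0∞ := fun J i => ∑ j ∈ Finset.range (J+1), p ((j:ℤ) - i) with hCdef
  have hCq : ∀ J i : ℕ, C J i + q i = tail p ((J:ℤ) - i) := by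
    intro J i
    have h0 := tail_add_nat p (-1 - i) (J+1)
    have h1 : (-1 - (i:ℤ)) + ((J+1 : ℕ) : ℤ) = (J:ℤ) - i := by push_cast; ring
    rw [h1] at h0
    rw [h0]
    congr 1
    have h2 := Finset.sum_range_reflect (fun j : ℕ => p ((j:ℤ) - i)) (J+1)
    rw [hCdef]
    simp only []
    rw [← h2]
    apply Finset.sum_congr rfl
    intro j hj
    rw [Finset.mem_range] at hj
    congr 1
    omega
  have hC1 : ∀ J i : ℕ, i < J → C J i + q i = 1 := by
    intro J i hi
    rw [hCq J i]
    exact tail_ge_one p hpsum hp2 (by omega)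
  -- summed identity
  have hI : ∀ J : ℕ, ∑ j ∈ Finset.range (J+1), v j = p 1 + ∑' i : ℕ, v i * C J i := by
    intro J
    have h1 : ∑ j ∈ Finset.range (J+1), v j
        = ∑ j ∈ Finset.range (J+1), ((if j = 0 then p 1 else 0) + ∑' i : ℕ, v i * p ((j:ℤ) - i)) :=
      Finset.sum_congr rfl fun j _ => hveq j
    rw [h1, Finset.sum_add_distrib]
    congr 1
    · rw [Finset.sum_ite_eq' (Finset.range (J+1)) 0 (fun _ => p 1)]
      simp
    · rw [← Summable.tsum_finsetSum (fun (j : ℕ) (_ : j ∈ Finset.range (J+1)) => ENNReal.summable)]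
      apply tsum_congr
      intro i
      rw [hCdef]
      simp only []
      rw [Finset.mul_sum]
  -- key identity
  have hKey : ∀ J : ℕ, v J + ∑ i ∈ Finset.range J, v i * q i
      = p 1 + ∑' d : ℕ, v (d+J) * C J (d+J) := by
    intro J
    have h3 := hI J
    rw [Finset.sum_range_succ] at h3
    have h4 := Summable.sum_add_tsum_nat_add' (f := fun i => v i * C J i) (k := J) ENNReal.summable
    rw [← h4] at h3
    set A := ∑ i ∈ Finset.range J, v i with hA
    set R := ∑' d : ℕ, v (d+J) * C J (d+J) with hR
    have hAne : A ≠ ⊤ := by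
      have : A ≤ ∑ _i ∈ Finset.range J, (1:ℝ≥0∞) := Finset.sum_le_sum (fun i _ => hvle i)
      simp only [Finset.sum_const, Finset.card_range, nsmul_eq_mul, mul_one] at this
      exact (lt_of_le_of_lt this (ENNReal.natCast_lt_top J)).ne
    have h5 : A + (v J + ∑ i ∈ Finset.range J, v i * q i) = A + (p 1 + R) := by
      calc A + (v J + ∑ i ∈ Finset.range J, v i * q i)
          = (A + v J) + ∑ i ∈ Finset.range J, v i * q i := by ring
        _ = (p 1 + (∑ i ∈ Finset.range J, v i * C J i + R)) + ∑ i ∈ Finset.range J, v i * q i := by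
            rw [h3]
        _ = p 1 + R + ∑ i ∈ Finset.range J, (v i * C J i + v i * q i) := by
            rw [Finset.sum_add_distrib]; ring
        _ = p 1 + R + ∑ i ∈ Finset.range J, v i := by
            congr 1
            apply Finset.sum_congr rfl
            intro i hi
            rw [Finset.mem_range] at hi
            rw [← mul_add, hC1 J i hi, mul_one]
        _ = A + (p 1 + R) := by rw [hA]; ring
    exact (ENNReal.add_right_inj hAne).mp h5
  -- bound on remainder
  have hRle : ∀ J : ℕ, (∑' d : ℕ, v (d+J) * C J (d+J)) ≤ v J * (1 + p 1) := by
    intro J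
    have step1 : (∑' d : ℕ, v (d+J) * C J (d+J)) ≤ ∑' d : ℕ, v J * C J (d+J) :=
      ENNReal.tsum_le_tsum (fun d => mul_le_mul_left (hvanti (Nat.le_add_left J d)) _)
    have step2 : (∑' d : ℕ, v J * C J (d+J)) = v J * ∑' d : ℕ, C J (d+J) :=
      ENNReal.tsum_mul_left
    have h6 : ∀ d : ℕ, C J (d+J) ≤ tail p (-(d:ℤ)) := by
      intro d
      have h7 := hCq J (d+J)
      have hc : (J:ℤ) - ((d+J:ℕ):ℤ) = -(d:ℤ) := by push_cast; ring
      rw [hc] at h7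
      exact le_self_add.trans_eq h7
    have step3 : (∑' d : ℕ, C J (d+J)) ≤ 1 + p 1 := by
      calc (∑' d : ℕ, C J (d+J)) ≤ ∑' d : ℕ, tail p (-(d:ℤ)) := ENNReal.tsum_le_tsum h6
        _ = tail p (-((0:ℕ):ℤ)) + ∑' d : ℕ, tail p (-((d+1:ℕ):ℤ)) :=
            tsum_eq_zero_add' ENNReal.summable
        _ = tail p 0 + ∑' d : ℕ, q d := by
            have e0 : (-((0:ℕ):ℤ)) = 0 := by norm_num
            rw [e0]
            congr 1
            apply tsum_congr
            intro d
            rw [hqdef]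
            congr 1
            push_cast
            ring
        _ ≤ 1 + p 1 := add_le_add (tail_le_one p hpsum 0) (le_of_eq hq)
    calc (∑' d : ℕ, v (d+J) * C J (d+J)) ≤ v J * ∑' d : ℕ, C J (d+J) := step1.trans_eq step2
      _ ≤ v J * (1 + p 1) := mul_le_mul_right step3 _
  -- limits
  have hb : (1 + p 1) ≠ ⊤ := ENNReal.add_ne_top.2 ⟨ENNReal.one_ne_top, hp1top⟩
  have hRlim : Tendsto (fun J => ∑' d : ℕ, v (d+J) * C J (d+J)) atTop (𝓝 0) := by
    have hub : Tendsto (fun J => v J * (1 + p 1)) atTop (𝓝 0) := by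
      have := ENNReal.Tendsto.mul_const h (Or.inr hb)
      simpa using this
    exact tendsto_of_tendsto_of_tendsto_of_le_of_le tendsto_const_nhds hub
      (fun J => zero_le) hRle
  have hlim1 : Tendsto (fun J => v J + ∑ i ∈ Finset.range J, v i * q i) atTop
      (𝓝 (0 + ∑' i : ℕ, v i * q i)) := h.add (ENNReal.tendsto_nat_tsum _)
  have hlim2 : Tendsto (fun J => p 1 + ∑' d : ℕ, v (d+J) * C J (d+J)) atTop (𝓝 (p 1 + 0)) :=
    tendsto_const_nhds.add hRlim
  have hqv : ∑' i : ℕ, v i * q i = p 1 := by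
    have h8 := tendsto_nhds_unique (hlim1.congr (fun J => hKey J)) hlim2
    simpa using h8
  -- termwise equality for q
  have hterm : ∀ (f : ℕ → ℝ≥0∞) (g : ℕ → ℝ≥0∞), (∀ i, f i ≤ 1) →
      (∑' i, f i * g i = ∑' i, g i) → (∑' i : ℕ, g i) ≠ ⊤ → ∀ i, f i * g i = g i := by
    intro f g hf hsum hfin i
    by_contra hne
    have hle : ∀ a, f a * g a ≤ g a := fun a => by
      calc f a * g a ≤ 1 * g a := mul_le_mul_left (hf a) _
        _ = g a := one_mul _
    have hlt : f i * g i < g i := lt_of_le_of_ne (hle i) hne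
    have : ∑' a, f a * g a < ∑' a, g a :=
      ENNReal.tsum_lt_tsum (hsum ▸ hfin) hle hlt
    rw [hsum] at this
    exact lt_irrefl _ this
  have hqfin : (∑' i : ℕ, q i) ≠ ⊤ := by rw [hq]; exact hp1top
  have hvq : ∀ i, v i * q i = q i := hterm v q hvle (hqv.trans hq.symm) hqfin
  -- find negative atom
  have hq0 : q 0 ≠ 0 := by
    intro h0
    apply hp1
    rw [← hq]
    apply ENNReal.tsum_eq_zero.2
    intro i
    refine le_antisymm ?_ zero_le
    rw [← h0, hqdef]
    exact tail_mono p (by push_cast; omega)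
  obtain ⟨d0, hd0⟩ : ∃ d : ℕ, p (-1 - ((0:ℕ):ℤ) - d) ≠ 0 := by
    by_contra hcon
    push_neg at hcon
    apply hq0
    rw [hqdef]
    exact ENNReal.tsum_eq_zero.2 hcon
  set b : ℕ := d0 + 1 with hbdef
  have hpb : p (-(b:ℤ)) ≠ 0 := by
    have harg : (-(b:ℤ)) = -1 - ((0:ℕ):ℤ) - d0 := by rw [hbdef]; push_cast; ring
    rw [harg]; exact hd0
  -- mass identity
  have hmass : ∀ j : ℕ, ((if j = 0 then p 1 else 0) + ∑' i : ℕ, p ((j:ℤ) - i)) = 1 := by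
    intro j
    have ht' : (∑' i : ℕ, p ((j:ℤ) - i)) = tail p j := rfl
    rcases Nat.eq_zero_or_pos j with rfl | hj
    · rw [if_pos rfl, ht']
      have h9 := tail_succ p 0
      norm_num at h9 ⊢
      rw [← h9]
      exact tail_ge_one p hpsum hp2 le_rfl
    · rw [if_neg (by omega), zero_add, ht']
      exact tail_ge_one p hpsum hp2 (by exact_mod_cast hj)
  -- propagation
  have hprop : ∀ j : ℕ, v j = 1 → v (j + b) = 1 := by
    intro j hvj
    have hfin0 : (if j = 0 then p 1 else 0) ≠ ⊤ := by
      split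
      · exact hp1top
      · exact ENNReal.zero_ne_top
    have h7 : (if j = 0 then p 1 else 0) + ∑' i : ℕ, v i * p ((j:ℤ) - i)
        = (if j = 0 then p 1 else 0) + ∑' i : ℕ, p ((j:ℤ) - i) := by
      rw [← hveq j, hvj, hmass j]
    have h8 : (∑' i : ℕ, v i * p ((j:ℤ) - i)) = ∑' i : ℕ, p ((j:ℤ) - i) :=
      (ENNReal.add_right_inj hfin0).mp h7
    have hfin1 : (∑' i : ℕ, p ((j:ℤ) - i)) ≠ ⊤ := by
      show tail p (j:ℤ) ≠ ⊤
      exact (lt_of_le_of_lt (tail_le_one p hpsum _) ENNReal.one_lt_top).ne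
    have h9 := hterm v (fun i => p ((j:ℤ) - i)) hvle h8 hfin1 (j + b)
    have harg : (j:ℤ) - ((j + b : ℕ):ℤ) = -(b:ℤ) := by push_cast; ring
    rw [harg] at h9
    have hptop : p (-(b:ℤ)) ≠ ⊤ := (lt_of_le_of_lt (hple _) ENNReal.one_lt_top).ne
    have h10 : p (-(b:ℤ)) * v (j + b) = p (-(b:ℤ)) * 1 := by
      rw [mul_one, mul_comm]; exact h9
    exact (ENNReal.mul_right_inj hpb hptop).mp h10
  -- v 0 = 1
  have hq0top : q 0 ≠ ⊤ := by
    have : q 0 ≤ 1 := tail_le_one p hpsum _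
    exact (lt_of_le_of_lt this ENNReal.one_lt_top).ne
  have hv0 : v 0 = 1 := by
    have h10 : q 0 * v 0 = q 0 * 1 := by rw [mul_one, mul_comm]; exact hvq 0
    exact (ENNReal.mul_right_inj hq0 hq0top).mp h10
  -- all v = 1
  have hvb : ∀ n : ℕ, v (n * b) = 1 := by
    intro n
    induction n with
    | zero => simpa using hv0
    | succ n ih =>
      have := hprop (n * b) ih
      have harg : n * b + b = (n+1) * b := by ring
      rwa [harg] at this
  have hallv : ∀ j, v j = 1 := by
    intro j
    refine le_antisymm (hvle j) ?_
    have hjb : j ≤ j * b := Nat.le_mul_of_pos_right j (by omega)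
    calc (1:ℝ≥0∞) = v (j * b) := (hvb j).symm
      _ ≤ v j := hvanti hjb
  have hconst : Tendsto v atTop (𝓝 1) :=
    tendsto_const_nhds.congr (fun j => (hallv j).symm)
  exact one_ne_zero (tendsto_nhds_unique hconst h)

variable {Ω : Type*} [MeasurableSpace Ω]

-- partial sums
def ps (ξ : ℕ → Ω → ℤ) (n : ℕ) (ω : Ω) : ℤ := ∑ i ∈ Finset.range n, ξ i ω

noncomputable def pr (P : Measure Ω) (ξ : ℕ → Ω → ℤ) (c : ℤ) : ℝ≥0∞ := P (ξ 0 ⁻¹' {c})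

def W (ξ : ℕ → Ω → ℤ) (n : ℕ) (ω : Ω) : Fin n → ℤ := fun i => ξ i ω

noncomputable def Phi (P : Measure Ω) (ξ : ℕ → Ω → ℤ) (n : ℕ) (a : Fin n → ℤ) : ℝ≥0∞ :=
  ∏ i, pr P ξ (a i)

def ext (n : ℕ) (a : Fin n → ℤ) (c : ℤ) (i : ℕ) : ℤ := if h : i < n then a ⟨i, h⟩ else c

section Basic
variable (P : Measure Ω) (ξ : ℕ → Ω → ℤ)

lemma meas_ps (hmeas : ∀ i, Measurable (ξ i)) (n : ℕ) : Measurable (ps ξ n) :=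
  Finset.measurable_sum _ (fun i _ => hmeas i)

lemma measW (hmeas : ∀ i, Measurable (ξ i)) (n : ℕ) : Measurable (W ξ n) :=
  measurable_pi_lambda _ (fun i => hmeas i)

lemma ident_apply (hmeas : ∀ i, Measurable (ξ i))
    (hident : ∀ i, P.map (ξ i) = P.map (ξ 0)) (n : ℕ) (A : Set ℤ) :
    P (ξ n ⁻¹' A) = P (ξ 0 ⁻¹' A) := by
  have hA : MeasurableSet A := Set.Countable.measurableSet (Set.to_countable A)
  rw [← Measure.map_apply (hmeas n) hA, hident n, Measure.map_apply (hmeas 0) hA]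

lemma cylP (hindep : iIndepFun ξ P) (hmeas : ∀ i, Measurable (ξ i))
    (hident : ∀ i, P.map (ξ i) = P.map (ξ 0)) (n : ℕ) (g : ℕ → ℤ) :
    P (⋂ i ∈ Finset.range n, ξ i ⁻¹' {g i}) = ∏ i ∈ Finset.range n, pr P ξ (g i) := by
  rw [hindep.meas_biInter (S := Finset.range n) (s := fun i => ξ i ⁻¹' {g i})
    (fun i _ => ⟨{g i}, Set.Countable.measurableSet (Set.to_countable _), rfl⟩)]
  exact Finset.prod_congr rfl fun i _ => ident_apply P ξ hmeas hident i {g i}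

lemma W_preim_singleton (n : ℕ) (a : Fin n → ℤ) :
    W ξ n ⁻¹' {a} = ⋂ i ∈ Finset.range n, ξ i ⁻¹' {ext n a 0 i} := by
  ext ω
  simp only [Set.mem_preimage, Set.mem_singleton_iff, Set.mem_iInter, Finset.mem_range, funext_iff]
  constructor
  · intro h i hi
    simp only [ext, dif_pos hi]
    exact h ⟨i, hi⟩
  · intro h i
    have := h i.1 i.2
    simpa only [W, ext, dif_pos i.2, Fin.eta] using this

lemma prod_ext_eq_Phi (n : ℕ) (a : Fin n → ℤ) (c : ℤ) :
    ∏ i ∈ Finset.range n, pr P ξ (ext n a c i) = Phi P ξ n a := by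
  rw [Phi, ← Fin.prod_univ_eq_prod_range (fun i => pr P ξ (ext n a c i)) n]
  apply Finset.prod_congr rfl
  intro i _
  congr 1
  simp only [ext, dif_pos i.2, Fin.eta]

lemma CYL (hindep : iIndepFun ξ P) (hmeas : ∀ i, Measurable (ξ i))
    (hident : ∀ i, P.map (ξ i) = P.map (ξ 0)) (n : ℕ) (B : Set (Fin n → ℤ)) :
    P (W ξ n ⁻¹' B) = ∑' a : B, Phi P ξ n a.1 := by
  have hdecomp : W ξ n ⁻¹' B = ⋃ a : B, W ξ n ⁻¹' {a.1} := by
    ext ω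
    simp only [Set.mem_preimage, Set.mem_iUnion, Set.mem_singleton_iff]
    exact ⟨fun h => ⟨⟨W ξ n ω, h⟩, rfl⟩, fun ⟨a, ha⟩ => ha ▸ a.2⟩
  rw [hdecomp, measure_iUnion]
  · refine tsum_congr fun a => ?_
    rw [W_preim_singleton, cylP P ξ hindep hmeas hident, prod_ext_eq_Phi]
  · intro a a' hne
    simp only [Function.onFun]
    rw [Set.disjoint_left]
    intro ω ha ha'
    simp only [Set.mem_preimage, Set.mem_singleton_iff] at ha ha'
    exact hne (Subtype.ext (ha ▸ ha'))
  · exact fun a => (measW ξ hmeas n) (measurableSet_singleton _)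

lemma SPLIT (hindep : iIndepFun ξ P) (hmeas : ∀ i, Measurable (ξ i))
    (hident : ∀ i, P.map (ξ i) = P.map (ξ 0)) (n : ℕ) (B : Set (Fin n → ℤ)) (c : ℤ) :
    P (W ξ n ⁻¹' B ∩ ξ n ⁻¹' {c}) = P (W ξ n ⁻¹' B) * pr P ξ c := by
  have hdecomp : W ξ n ⁻¹' B ∩ ξ n ⁻¹' {c}
      = ⋃ a : B, ⋂ i ∈ Finset.range (n+1), ξ i ⁻¹' {ext n a.1 c i} := by
    ext ω
    simp only [Set.mem_inter_iff, Set.mem_preimage, Set.mem_iUnion, Set.mem_iInter,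
      Set.mem_singleton_iff, Finset.mem_range]
    constructor
    · rintro ⟨hB, hc⟩
      refine ⟨⟨W ξ n ω, hB⟩, fun i hi => ?_⟩
      by_cases h : i < n
      · simp only [ext, dif_pos h]; rfl
      · have : i = n := by omega
        subst this
        simp only [ext, dif_neg h]
        exact hc
    · rintro ⟨a, ha⟩
      constructor
      · have hW : W ξ n ω = a.1 := funext fun i => by
          have := ha i.1 (by omega)
          simpa only [W, ext, dif_pos i.2, Fin.eta] using this
        rw [hW]; exact a.2
      · have := ha n (by omega)
        simpa only [ext, dif_neg (lt_irrefl n)] using this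
  rw [hdecomp, measure_iUnion]
  · have h1 : ∀ a : B, P (⋂ i ∈ Finset.range (n+1), ξ i ⁻¹' {ext n a.1 c i})
        = Phi P ξ n a.1 * pr P ξ c := by
      intro a
      rw [cylP P ξ hindep hmeas hident, Finset.prod_range_succ]
      congr 1
      · exact prod_ext_eq_Phi P ξ n a.1 c
      · simp only [ext, dif_neg (lt_irrefl n)]
    calc ∑' a : B, P (⋂ i ∈ Finset.range (n+1), ξ i ⁻¹' {ext n a.1 c i})
        = ∑' a : B, Phi P ξ n a.1 * pr P ξ c := tsum_congr h1
      _ = (∑' a : B, Phi P ξ n a.1) * pr P ξ c := ENNReal.tsum_mul_right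
      _ = P (W ξ n ⁻¹' B) * pr P ξ c := by rw [CYL P ξ hindep hmeas hident]
  · intro a a' hne
    simp only [Function.onFun]
    rw [Set.disjoint_left]
    intro ω ha ha'
    simp only [Set.mem_iInter, Set.mem_preimage, Set.mem_singleton_iff, Finset.mem_range] at ha ha'
    apply hne
    refine Subtype.ext (funext fun i => ?_)
    have h1 := ha i.1 (by omega)
    have h2 := ha' i.1 (by omega)
    simp only [ext, dif_pos i.2, Fin.eta] at h1 h2
    rw [← h1, ← h2]
  · intro a
    exact MeasurableSet.biInter (Set.to_countable _)
      (fun i _ => (hmeas i) (measurableSet_singleton _))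

end Basic

-- finite-path partial sums
def pf (n l : ℕ) (a : Fin n → ℤ) : ℤ := ∑ i ∈ Finset.range l, ext n a 0 i

def B1 (n : ℕ) (j : ℤ) : Set (Fin n → ℤ) := {a | (∀ l ≤ n, 0 ≤ pf n l a) ∧ pf n n a = j}
def B2 (n : ℕ) (j : ℤ) : Set (Fin n → ℤ) := {a | (∀ l ≤ n, pf n l a ≤ j) ∧ pf n n a = j}

lemma pf_zero (n : ℕ) (a : Fin n → ℤ) : pf n 0 a = 0 := by simp [pf]

lemma pf_rev (n l : ℕ) (hl : l ≤ n) (a : Fin n → ℤ) :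
    pf n l (a ∘ Fin.revPerm) = pf n n a - pf n (n - l) a := by
  have h1 : pf n n a - pf n (n - l) a = ∑ i ∈ Finset.Ico (n - l) n, ext n a 0 i :=
    (Finset.sum_Ico_eq_sub _ (by omega)).symm
  rw [h1, pf]
  refine Finset.sum_nbij' (i := fun i => n - (i + 1)) (j := fun i => n - (i + 1))
    ?_ ?_ ?_ ?_ ?_
  · intro i hi; rw [Finset.mem_range] at hi; rw [Finset.mem_Ico]; omega
  · intro i hi; rw [Finset.mem_Ico] at hi; rw [Finset.mem_range]; omega
  · intro i hi; rw [Finset.mem_range] at hi; omega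
  · intro i hi; rw [Finset.mem_Ico] at hi; omega
  · intro i hi
    rw [Finset.mem_range] at hi
    have hin : i < n := by omega
    have hin2 : n - (i + 1) < n := by omega
    simp only [ext, dif_pos hin, dif_pos hin2, Function.comp_apply]
    first
    | rfl
    | (congr 1
       apply Fin.ext
       simp only [Fin.revPerm_apply, Fin.val_rev])

lemma mem_B1_rev (n : ℕ) (j : ℤ) (a : Fin n → ℤ) :
    a ∘ Fin.revPerm ∈ B1 n j ↔ a ∈ B2 n j := by
  have htot : pf n n (a ∘ Fin.revPerm) = pf n n a := by
    rw [pf_rev n n le_rfl a, Nat.sub_self, pf_zero, sub_zero]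
  constructor
  · rintro ⟨h0, htt⟩
    rw [htot] at htt
    refine ⟨fun l hl => ?_, htt⟩
    have := h0 (n - l) (by omega)
    rw [pf_rev n (n - l) (by omega) a, htt] at this
    have hnl : n - (n - l) = l := by omega
    rw [hnl] at this
    omega
  · rintro ⟨hle, htt⟩
    refine ⟨fun l hl => ?_, by rw [htot]; exact htt⟩
    rw [pf_rev n l hl a, htt]
    have := hle (n - l) (by omega)
    omega

def revE (n : ℕ) (j : ℤ) : ↥(B2 n j) ≃ ↥(B1 n j) :=
  { toFun := fun a => ⟨a.1 ∘ Fin.revPerm, (mem_B1_rev n j a.1).2 a.2⟩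
    invFun := fun b => ⟨b.1 ∘ Fin.revPerm, by
      have h : (b.1 ∘ Fin.revPerm) ∘ Fin.revPerm = b.1 :=
        funext fun i => by simp [Function.comp_apply]
      exact (mem_B1_rev n j (b.1 ∘ Fin.revPerm)).1 (by rw [h]; exact b.2)⟩
    left_inv := fun a => Subtype.ext (funext fun i => by simp [Function.comp_apply])
    right_inv := fun b => Subtype.ext (funext fun i => by simp [Function.comp_apply]) }

lemma Phi_rev (P : Measure Ω) (ξ : ℕ → Ω → ℤ) (n : ℕ) (a : Fin n → ℤ) :
    Phi P ξ n (a ∘ Fin.revPerm) = Phi P ξ n a := by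
  rw [Phi, Phi]
  exact Equiv.prod_comp Fin.revPerm (fun i => pr P ξ (a i))

lemma REVP (P : Measure Ω) (ξ : ℕ → Ω → ℤ) (hindep : iIndepFun ξ P)
    (hmeas : ∀ i, Measurable (ξ i))
    (hident : ∀ i, P.map (ξ i) = P.map (ξ 0)) (n : ℕ) (j : ℤ) :
    P (W ξ n ⁻¹' B1 n j) = P (W ξ n ⁻¹' B2 n j) := by
  rw [CYL P ξ hindep hmeas hident, CYL P ξ hindep hmeas hident]
  rw [← Equiv.tsum_eq (revE n j) (fun b : ↥(B1 n j) => Phi P ξ n b.1)]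
  exact tsum_congr fun (c : ↥(B2 n j)) => Phi_rev P ξ n c.1


-- events on Ω
def G (ξ : ℕ → Ω → ℤ) (n : ℕ) (j : ℤ) : Set Ω :=
  {ω | (∀ l ≤ n, 0 ≤ ps ξ l ω) ∧ ps ξ n ω = j}
def Gh (ξ : ℕ → Ω → ℤ) (n : ℕ) (j : ℤ) : Set Ω :=
  {ω | (∀ l ≤ n, ps ξ l ω ≤ j) ∧ ps ξ n ω = j}

lemma ps_succ (ξ : ℕ → Ω → ℤ) (n : ℕ) (ω : Ω) : ps ξ (n+1) ω = ps ξ n ω + ξ n ω :=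
  Finset.sum_range_succ _ n

lemma ps_zero (ξ : ℕ → Ω → ℤ) (ω : Ω) : ps ξ 0 ω = 0 := by simp [ps]

lemma ps_eq_pf (ξ : ℕ → Ω → ℤ) {l n : ℕ} (hl : l ≤ n) (ω : Ω) :
    ps ξ l ω = pf n l (W ξ n ω) := by
  refine Finset.sum_congr rfl fun i hi => ?_
  rw [Finset.mem_range] at hi
  have hin : i < n := by omega
  simp only [ext, dif_pos hin]
  rfl

lemma G_eq (ξ : ℕ → Ω → ℤ) (n : ℕ) (j : ℤ) : G ξ n j = W ξ n ⁻¹' B1 n j := by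
  ext ω
  simp only [G, B1, Set.mem_setOf_eq, Set.mem_preimage]
  constructor
  · rintro ⟨h0, ht⟩
    exact ⟨fun l hl => (ps_eq_pf ξ hl ω) ▸ h0 l hl, (ps_eq_pf ξ le_rfl ω) ▸ ht⟩
  · rintro ⟨h0, ht⟩
    exact ⟨fun l hl => (ps_eq_pf ξ hl ω) ▸ h0 l hl, (ps_eq_pf ξ le_rfl ω) ▸ ht⟩

lemma Gh_eq (ξ : ℕ → Ω → ℤ) (n : ℕ) (j : ℤ) : Gh ξ n j = W ξ n ⁻¹' B2 n j := by
  ext ω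
  simp only [Gh, B2, Set.mem_setOf_eq, Set.mem_preimage]
  constructor
  · rintro ⟨h0, ht⟩
    exact ⟨fun l hl => (ps_eq_pf ξ hl ω) ▸ h0 l hl, (ps_eq_pf ξ le_rfl ω) ▸ ht⟩
  · rintro ⟨h0, ht⟩
    exact ⟨fun l hl => (ps_eq_pf ξ hl ω) ▸ h0 l hl, (ps_eq_pf ξ le_rfl ω) ▸ ht⟩

lemma meas_G (ξ : ℕ → Ω → ℤ) (hmeas : ∀ i, Measurable (ξ i)) (n : ℕ) (j : ℤ) :
    MeasurableSet (G ξ n j) := by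
  rw [G_eq]
  exact (measW ξ hmeas n) (Set.Countable.measurableSet (Set.to_countable _))

lemma meas_Gh (ξ : ℕ → Ω → ℤ) (hmeas : ∀ i, Measurable (ξ i)) (n : ℕ) (j : ℤ) :
    MeasurableSet (Gh ξ n j) := by
  rw [Gh_eq]
  exact (measW ξ hmeas n) (Set.Countable.measurableSet (Set.to_countable _))

lemma G_Gh_P (P : Measure Ω) (ξ : ℕ → Ω → ℤ) (hindep : iIndepFun ξ P)
    (hmeas : ∀ i, Measurable (ξ i)) (hident : ∀ i, P.map (ξ i) = P.map (ξ 0)) (n : ℕ) (j : ℤ) :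
    P (G ξ n j) = P (Gh ξ n j) := by
  rw [G_eq, Gh_eq]
  exact REVP P ξ hindep hmeas hident n j

-- step equation
lemma G_succ_decomp (P : Measure Ω) (ξ : ℕ → Ω → ℤ)
    (hindep : iIndepFun ξ P)
    (hmeas : ∀ i, Measurable (ξ i)) (hident : ∀ i, P.map (ξ i) = P.map (ξ 0))
    (n : ℕ) (j : ℕ) :
    P (G ξ (n+1) (j:ℤ)) = ∑' i : ℕ, P (G ξ n (i:ℤ)) * pr P ξ ((j:ℤ) - i) := by
  have hset : G ξ (n+1) (j:ℤ) = ⋃ i : ℕ, (G ξ n (i:ℤ) ∩ ξ n ⁻¹' {(j:ℤ) - i}) := by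
    ext ω
    simp only [G, Set.mem_setOf_eq, Set.mem_iUnion, Set.mem_inter_iff, Set.mem_preimage,
      Set.mem_singleton_iff]
    constructor
    · rintro ⟨h0, ht⟩
      have hps : 0 ≤ ps ξ n ω := h0 n (by omega)
      refine ⟨(ps ξ n ω).toNat, ⟨⟨fun l hl => h0 l (by omega), by omega⟩, ?_⟩⟩
      have := ps_succ ξ n ω
      omega
    · rintro ⟨i, ⟨⟨h0, ht⟩, hx⟩⟩
      have hsucc := ps_succ ξ n ω
      constructor
      · intro l hl
        rcases Nat.lt_or_ge l (n+1) with h | h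
        · exact h0 l (by omega)
        · have : l = n + 1 := by omega
          subst this
          have hj : (0:ℤ) ≤ (j:ℤ) := by positivity
          omega
      · omega
  rw [hset, measure_iUnion]
  · refine tsum_congr fun i => ?_
    rw [G_eq, SPLIT P ξ hindep hmeas hident, ← G_eq]
  · intro i i' hne
    simp only [Function.onFun]
    rw [Set.disjoint_left]
    rintro ω ⟨⟨_, hti⟩, _⟩ ⟨⟨_, hti'⟩, _⟩
    apply hne
    have : (i:ℤ) = (i':ℤ) := by omega
    exact_mod_cast this
  · exact fun i => (meas_G ξ hmeas n i).inter ((hmeas n) (measurableSet_singleton _))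

lemma G_zero (P : Measure Ω) [IsProbabilityMeasure P] (ξ : ℕ → Ω → ℤ) (j : ℕ) :
    P (G ξ 0 (j:ℤ)) = if j = 0 then 1 else 0 := by
  rcases Nat.eq_zero_or_pos j with rfl | hj
  · rw [if_pos rfl]
    have : G ξ 0 ((0:ℕ):ℤ) = Set.univ := by
      ext ω
      simp only [G, Set.mem_setOf_eq, Set.mem_univ, iff_true]
      constructor
      · intro l hl
        have : l = 0 := by omega
        subst this
        rw [ps_zero]
      · rw [ps_zero]; norm_num
    rw [this]
    exact measure_univ
  · rw [if_neg (by omega)]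
    have : G ξ 0 (j:ℤ) = ∅ := by
      ext ω
      simp only [G, Set.mem_setOf_eq, Set.mem_empty_iff_false, iff_false, not_and]
      intro _
      rw [ps_zero]
      omega
    rw [this]
    exact measure_empty

-- first passage above level j
def Ej (ξ : ℕ → Ω → ℤ) (j : ℕ) : Set Ω := {ω | ∃ n, (j:ℤ) < ps ξ n ω}

lemma meas_Ej (ξ : ℕ → Ω → ℤ) (hmeas : ∀ i, Measurable (ξ i)) (j : ℕ) :
    MeasurableSet (Ej ξ j) := by
  have : Ej ξ j = ⋃ n : ℕ, (ps ξ n) ⁻¹' {z | (j:ℤ) < z} := by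
    ext ω; simp [Ej]
  rw [this]
  exact MeasurableSet.iUnion fun n =>
    (meas_ps ξ hmeas n) (Set.Countable.measurableSet (Set.to_countable _))

lemma Ej_antitone (ξ : ℕ → Ω → ℤ) : Antitone (Ej ξ) := by
  intro j j' hjj ω
  simp only [Ej, Set.mem_setOf_eq]
  rintro ⟨n, hn⟩
  exact ⟨n, by omega⟩

lemma Ej_decomp (P : Measure Ω) (ξ : ℕ → Ω → ℤ)
    (hindep : iIndepFun ξ P)
    (hmeas : ∀ i, Measurable (ξ i)) (hident : ∀ i, P.map (ξ i) = P.map (ξ 0))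
    (hskip : P {ω | 2 ≤ ξ 0 ω} = 0) (j : ℕ) :
    P (Ej ξ j) = ∑' n : ℕ, P (G ξ n (j:ℤ)) * pr P ξ 1 := by
  set D : ℕ → Set Ω := fun n => Gh ξ n (j:ℤ) ∩ ξ n ⁻¹' {1} with hD
  set NN : Set Ω := ⋃ i : ℕ, ξ i ⁻¹' {z | 2 ≤ z} with hNN
  have hNNnull : P NN = 0 := by
    rw [hNN]
    apply measure_iUnion_null
    intro i
    rw [ident_apply P ξ hmeas hident i]
    exact hskip
  have hsub1 : (⋃ n, D n) ⊆ Ej ξ j := by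
    rintro ω hω
    rw [Set.mem_iUnion] at hω
    obtain ⟨n, ⟨⟨_, ht⟩, hx⟩⟩ := hω
    have hx' : ξ n ω = 1 := hx
    refine ⟨n+1, ?_⟩
    have := ps_succ ξ n ω
    omega
  have hsub2 : Ej ξ j ⊆ (⋃ n, D n) ∪ NN := by
    intro ω hω
    by_cases hN : ω ∈ NN
    · exact Or.inr hN
    left
    have hsteps : ∀ i, ξ i ω ≤ 1 := by
      intro i
      by_contra hcon
      apply hN
      rw [hNN, Set.mem_iUnion]
      exact ⟨i, by show (2:ℤ) ≤ ξ i ω; omega⟩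
    obtain ⟨n, hn⟩ := hω
    have hex : ∃ n, (j:ℤ) < ps ξ n ω := ⟨n, hn⟩
    obtain ⟨m, hfind, hmin⟩ :
        ∃ m, ((j:ℤ) < ps ξ (m+1) ω) ∧ ∀ l, l ≤ m → ps ξ l ω ≤ (j:ℤ) := by
      have h1 := Nat.find_spec hex
      have hpos : 1 ≤ Nat.find hex := by
        rcases Nat.eq_zero_or_pos (Nat.find hex) with h0 | h
        · rw [h0] at h1
          rw [ps_zero] at h1
          omega
        · exact h
      refine ⟨Nat.find hex - 1, ?_, ?_⟩
      · have heq : Nat.find hex - 1 + 1 = Nat.find hex := by omega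
        rw [heq]
        exact h1
      · intro l hl
        have := Nat.find_min hex (m := l) (by omega)
        omega
    have hstep := hsteps m
    have hsucc := ps_succ ξ m ω
    have hpsm : ps ξ m ω = (j:ℤ) := by
      have := hmin m le_rfl
      omega
    have hxm : ξ m ω = 1 := by omega
    rw [Set.mem_iUnion]
    exact ⟨m, ⟨⟨hmin, hpsm⟩, hxm⟩⟩
  have hmeasD : ∀ n, MeasurableSet (D n) := fun n =>
    (meas_Gh ξ hmeas n _).inter ((hmeas n) (measurableSet_singleton _))
  have hdisj : Pairwise (Function.onFun Disjoint D) := by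
    have key : ∀ m m' : ℕ, m < m' → Disjoint (D m) (D m') := by
      intro m m' hlt
      refine Set.disjoint_left.mpr ?_
      rintro ω ⟨⟨_, htm⟩, hxm⟩ ⟨⟨hle', _⟩, _⟩
      have hxm' : ξ m ω = 1 := hxm
      have h1 := hle' (m+1) (by omega)
      have h2 := ps_succ ξ m ω
      omega
    intro m m' hne
    rcases Nat.lt_or_ge m m' with hlt | hge
    · exact key m m' hlt
    · exact (key m' m (by omega)).symm
  have hEeq : P (Ej ξ j) = P (⋃ n, D n) := by
    refine le_antisymm ?_ (measure_mono hsub1)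
    calc P (Ej ξ j) ≤ P ((⋃ n, D n) ∪ NN) := measure_mono hsub2
      _ ≤ P (⋃ n, D n) + P NN := measure_union_le _ _
      _ = P (⋃ n, D n) := by rw [hNNnull, add_zero]
  rw [hEeq, measure_iUnion hdisj hmeasD]
  refine tsum_congr fun n => ?_
  have : D n = Gh ξ n (j:ℤ) ∩ ξ n ⁻¹' {1} := rfl
  rw [this, Gh_eq, SPLIT P ξ hindep hmeas hident, ← Gh_eq,
    ← G_Gh_P P ξ hindep hmeas hident]


lemma zero_one (P : Measure Ω) [IsProbabilityMeasure P] (ξ : ℕ → Ω → ℤ)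
    (hindep : iIndepFun ξ P)
    (hmeas : ∀ i, Measurable (ξ i)) :
    P (⋂ j : ℕ, Ej ξ j) = 0 ∨ P (⋂ j : ℕ, Ej ξ j) = 1 := by
  set s : ℕ → MeasurableSpace Ω := fun n => MeasurableSpace.comap (ξ n) inferInstance with hs
  have h_le : ∀ n, s n ≤ ‹MeasurableSpace Ω› := fun n => (hmeas n).comap_le
  have h_indep : iIndep s P := hindep.iIndep
  apply measure_zero_or_one_of_measurableSet_limsup_atTop h_le h_indep
  rw [limsup_eq_iInf_iSup_of_nat, MeasurableSpace.measurableSet_iInf]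
  intro N
  have hEN : (⋂ j : ℕ, Ej ξ j)
      = ⋂ j : ℕ, ⋃ n : ℕ, {ω | (j:ℤ) < ∑ i ∈ Finset.Ico N n, ξ i ω} := by
    ext ω
    simp only [Set.mem_iInter, Set.mem_iUnion, Set.mem_setOf_eq, Ej]
    constructor
    · intro h j
      obtain ⟨MB, hMB⟩ : ∃ MB : ℤ, ∀ l ≤ N, ps ξ l ω ≤ MB := by
        refine ⟨(Finset.range (N+1)).sup' (by simp) (fun l => ps ξ l ω), ?_⟩
        intro l hl
        exact Finset.le_sup' (fun l => ps ξ l ω) (Finset.mem_range.mpr (by omega))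
      obtain ⟨n, hn⟩ := h ((max MB ((j:ℤ) + ps ξ N ω)).toNat)
      have hcast := Int.self_le_toNat (max MB ((j:ℤ) + ps ξ N ω))
      have hm1 : MB ≤ max MB ((j:ℤ) + ps ξ N ω) := le_max_left _ _
      have hm2 : (j:ℤ) + ps ξ N ω ≤ max MB ((j:ℤ) + ps ξ N ω) := le_max_right _ _
      have hNn : N ≤ n := by
        by_contra hc
        have := hMB n (by omega)
        omega
      refine ⟨n, ?_⟩
      have hsum : ∑ i ∈ Finset.Ico N n, ξ i ω = ps ξ n ω - ps ξ N ω :=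
        Finset.sum_Ico_eq_sub _ hNn
      omega
    · intro h j
      obtain ⟨n, hn⟩ := h (((j:ℤ) - ps ξ N ω).toNat)
      have hcast := Int.self_le_toNat ((j:ℤ) - ps ξ N ω)
      have hNn : N ≤ n := by
        by_contra hc
        have hemp : Finset.Ico N n = ∅ := by
          rw [Finset.Ico_eq_empty_iff]
          omega
        rw [hemp, Finset.sum_empty] at hn
        omega
      have hsum : ∑ i ∈ Finset.Ico N n, ξ i ω = ps ξ n ω - ps ξ N ω :=
        Finset.sum_Ico_eq_sub _ hNn
      exact ⟨n, by omega⟩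
  rw [hEN]
  have hsum_meas : ∀ n : ℕ,
      @Measurable Ω ℤ (⨆ i, ⨆ (_ : i ≥ N), s i) _ (fun ω => ∑ i ∈ Finset.Ico N n, ξ i ω) := by
    intro n
    apply Finset.measurable_sum
    intro i hi
    rw [Finset.mem_Ico] at hi
    have h1 : @Measurable Ω ℤ (s i) _ (ξ i) := by
      rw [hs]
      exact measurable_iff_comap_le.mpr le_rfl
    exact h1.mono (le_iSup₂ (f := fun (i : ℕ) (_ : i ≥ N) => s i) i hi.1) le_rfl
  apply MeasurableSet.iInter
  intro j
  apply MeasurableSet.iUnion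
  intro n
  exact hsum_meas n (Set.Countable.measurableSet (Set.to_countable {z : ℤ | (j:ℤ) < z}))

lemma dichotomy (P : Measure Ω) [IsProbabilityMeasure P] (ξ : ℕ → Ω → ℤ)
    (hindep : iIndepFun ξ P)
    (hmeas : ∀ i, Measurable (ξ i)) :
    (∀ j, P (Ej ξ j) = 1) ∨ Tendsto (fun j => P (Ej ξ j)) atTop (𝓝 0) := by
  rcases zero_one P ξ hindep hmeas with h0 | h1
  · right
    have ht := tendsto_measure_iInter_atTop (μ := P) (s := Ej ξ)
      (fun j => (meas_Ej ξ hmeas j).nullMeasurableSet) (Ej_antitone ξ)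
      ⟨0, measure_ne_top P _⟩
    rw [h0] at ht
    exact ht
  · left
    intro j
    refine le_antisymm ?_ ?_
    · calc P (Ej ξ j) ≤ P Set.univ := measure_mono (Set.subset_univ _)
        _ = 1 := measure_univ
    · rw [← h1]
      exact measure_mono (Set.iInter_subset _ j)

lemma tail_prob (P : Measure Ω) (ξ : ℕ → Ω → ℤ) (hmeas : ∀ i, Measurable (ξ i)) (t : ℤ) :
    P (ξ 0 ⁻¹' {z | z ≤ t}) = ∑' d : ℕ, pr P ξ (t - d) := by
  have hset : ξ 0 ⁻¹' {z | z ≤ t} = ⋃ d : ℕ, ξ 0 ⁻¹' {t - (d:ℤ)} := by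
    ext ω
    simp only [Set.mem_preimage, Set.mem_setOf_eq, Set.mem_iUnion, Set.mem_singleton_iff]
    constructor
    · intro h
      refine ⟨(t - ξ 0 ω).toNat, ?_⟩
      omega
    · rintro ⟨d, hd⟩
      omega
  rw [hset, measure_iUnion]
  · rfl
  · intro d d' hne
    refine Set.disjoint_left.mpr ?_
    intro ω h1 h2
    have h1' : ξ 0 ω = t - d := h1
    have h2' : ξ 0 ω = t - d' := h2
    apply hne
    omega
  · exact fun d => (hmeas 0) (measurableSet_singleton _)

lemma pr_total (P : Measure Ω) [IsProbabilityMeasure P] (ξ : ℕ → Ω → ℤ)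
    (hmeas : ∀ i, Measurable (ξ i)) :
    ∑' z : ℤ, pr P ξ z = 1 := by
  have hset : (Set.univ : Set Ω) = ⋃ z : ℤ, ξ 0 ⁻¹' {z} := by
    ext ω
    simp only [Set.mem_univ, Set.mem_iUnion, Set.mem_preimage, Set.mem_singleton_iff, true_iff]
    exact ⟨ξ 0 ω, rfl⟩
  have := measure_univ (μ := P)
  rw [hset, measure_iUnion] at this
  · exact this
  · intro z z' hne
    refine Set.disjoint_left.mpr ?_
    intro ω h1 h2
    have h1' : ξ 0 ω = z := h1
    have h2' : ξ 0 ω = z' := h2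
    exact hne (h1' ▸ h2')
  · exact fun z => (hmeas 0) (measurableSet_singleton _)

lemma pr_two (P : Measure Ω) (ξ : ℕ → Ω → ℤ) (hskip : P {ω | 2 ≤ ξ 0 ω} = 0)
    (z : ℤ) (hz : 2 ≤ z) : pr P ξ z = 0 := by
  refine measure_mono_null ?_ hskip
  intro ω h
  have h' : ξ 0 ω = z := h
  show 2 ≤ ξ 0 ω
  omega

-- counting identity
lemma count_identity (z : ℤ) :
    ENNReal.ofReal (-(z:ℝ)) = ∑' i : ℕ, (if z ≤ -1 - (i:ℤ) then (1:ℝ≥0∞) else 0) := by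
  have hrhs : (∑' i : ℕ, (if z ≤ -1 - (i:ℤ) then (1:ℝ≥0∞) else 0)) = ((-z).toNat : ℝ≥0∞) := by
    rw [tsum_eq_sum (s := Finset.range ((-z).toNat))]
    · have : ∀ i ∈ Finset.range ((-z).toNat), (if z ≤ -1 - (i:ℤ) then (1:ℝ≥0∞) else 0) = 1 := by
        intro i hi
        rw [Finset.mem_range] at hi
        rw [if_pos (by omega)]
      rw [Finset.sum_congr rfl this]
      simp
    · intro i hi
      rw [Finset.mem_range] at hi
      rw [if_neg (by omega)]
  rw [hrhs]
  rcases le_or_gt z 0 with h | h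
  · have hz : (-z) = (((-z).toNat : ℕ) : ℤ) := by omega
    have : (-(z:ℝ)) = (((-z).toNat : ℕ) : ℝ) := by exact_mod_cast hz
    rw [this, ENNReal.ofReal_natCast]
  · have h1 : (-(z:ℝ)) ≤ 0 := by
      have : (1:ℝ) ≤ (z:ℝ) := by exact_mod_cast h
      linarith
    have h2 : (-z).toNat = 0 := by omega
    rw [ENNReal.ofReal_of_nonpos h1, h2]
    simp

lemma meanzero (P : Measure Ω) [IsProbabilityMeasure P] (ξ : ℕ → Ω → ℤ)
    (hmeas : ∀ i, Measurable (ξ i))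
    (hint : Integrable (fun ω => ((ξ 0 ω : ℤ) : ℝ)) P)
    (hcent : ∫ ω, ((ξ 0 ω : ℤ) : ℝ) ∂P = 0)
    (hskip : P {ω | 2 ≤ ξ 0 ω} = 0) :
    ∑' i : ℕ, P (ξ 0 ⁻¹' {z | z ≤ -1 - (i:ℤ)}) = P (ξ 0 ⁻¹' {1}) := by
  set g : Ω → ℝ := fun ω => ((ξ 0 ω : ℤ) : ℝ) with hg
  have hge := integral_eq_lintegral_pos_part_sub_lintegral_neg_part hint
  rw [hcent] at hge
  -- positive part
  have hpos : ∫⁻ ω, ENNReal.ofReal (g ω) ∂P = P (ξ 0 ⁻¹' {1}) := by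
    have hc : ∀ᵐ ω ∂P, ¬ (2 ≤ ξ 0 ω) := by
      rw [ae_iff]
      simpa only [not_not] using hskip
    have hae : ∀ᵐ ω ∂P, ENNReal.ofReal (g ω)
        = Set.indicator (ξ 0 ⁻¹' {1}) (fun _ => (1:ℝ≥0∞)) ω := by
      filter_upwards [hc] with ω hω
      by_cases h1 : ξ 0 ω = 1
      · rw [Set.indicator_of_mem (by exact h1)]
        rw [hg]
        simp only [h1]
        norm_num
      · rw [Set.indicator_of_notMem (by exact h1)]
        rw [hg]
        have hle : ξ 0 ω ≤ 0 := by omega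
        apply ENNReal.ofReal_of_nonpos
        show ((ξ 0 ω : ℤ) : ℝ) ≤ 0
        exact_mod_cast hle
    rw [lintegral_congr_ae hae, lintegral_indicator_const ((hmeas 0) (measurableSet_singleton _)),
      one_mul]
  -- negative part
  have hneg : ∫⁻ ω, ENNReal.ofReal (-(g ω)) ∂P
      = ∑' i : ℕ, P (ξ 0 ⁻¹' {z | z ≤ -1 - (i:ℤ)}) := by
    have hpt : ∀ ω, ENNReal.ofReal (-(g ω))
        = ∑' i : ℕ, Set.indicator (ξ 0 ⁻¹' {z | z ≤ -1 - (i:ℤ)}) (fun _ => (1:ℝ≥0∞)) ω := by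
      intro ω
      rw [hg]
      rw [count_identity (ξ 0 ω)]
      refine tsum_congr fun i => ?_
      by_cases hmem : ω ∈ ξ 0 ⁻¹' {z | z ≤ -1 - (i:ℤ)}
      · rw [Set.indicator_of_mem hmem, if_pos (show ξ 0 ω ≤ -1 - (i:ℤ) from hmem)]
      · rw [Set.indicator_of_notMem hmem, if_neg (show ¬ (ξ 0 ω ≤ -1 - (i:ℤ)) from hmem)]
    rw [lintegral_congr hpt, lintegral_tsum]
    · refine tsum_congr fun i => ?_
      rw [lintegral_indicator_const ((hmeas 0) (Set.Countable.measurableSet (Set.to_countable _))),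
        one_mul]
    · intro i
      exact (measurable_const.indicator ((hmeas 0)
        (Set.Countable.measurableSet (Set.to_countable _)))).aemeasurable
  -- finiteness
  have hfin := hint.2
  rw [HasFiniteIntegral] at hfin
  have hApos : ∫⁻ ω, ENNReal.ofReal (g ω) ∂P ≠ ⊤ := by
    refine (lt_of_le_of_lt (lintegral_mono fun ω => ?_) hfin).ne
    calc ENNReal.ofReal (g ω) ≤ ENNReal.ofReal |g ω| := ENNReal.ofReal_le_ofReal (le_abs_self _)
      _ = ‖g ω‖₊ := by rw [← Real.norm_eq_abs, ofReal_norm, enorm_eq_nnnorm]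
  have hAneg : ∫⁻ ω, ENNReal.ofReal (-(g ω)) ∂P ≠ ⊤ := by
    refine (lt_of_le_of_lt (lintegral_mono fun ω => ?_) hfin).ne
    calc ENNReal.ofReal (-(g ω)) ≤ ENNReal.ofReal |g ω| :=
        ENNReal.ofReal_le_ofReal (neg_le_abs _)
      _ = ‖g ω‖₊ := by rw [← Real.norm_eq_abs, ofReal_norm, enorm_eq_nnnorm]
  have heq : (∫⁻ ω, ENNReal.ofReal (g ω) ∂P) = ∫⁻ ω, ENNReal.ofReal (-(g ω)) ∂P := by
    have h1 : (∫⁻ ω, ENNReal.ofReal (g ω) ∂P).toReal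
        = (∫⁻ ω, ENNReal.ofReal (-(g ω)) ∂P).toReal := by linarith
    exact (ENNReal.toReal_eq_toReal_iff' hApos hAneg).mp h1
  rw [← hneg, ← heq, hpos]

lemma u_eq (P : Measure Ω) [IsProbabilityMeasure P] (ξ : ℕ → Ω → ℤ)
    (hindep : iIndepFun ξ P)
    (hmeas : ∀ i, Measurable (ξ i)) (hident : ∀ i, P.map (ξ i) = P.map (ξ 0)) (j : ℕ) :
    (∑' n : ℕ, P (G ξ n (j:ℤ)))
      = (if j = 0 then 1 else 0)
        + ∑' i : ℕ, (∑' n : ℕ, P (G ξ n (i:ℤ))) * pr P ξ ((j:ℤ) - i) := by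
  rw [tsum_eq_zero_add' ENNReal.summable, G_zero P ξ j]
  congr 1
  calc (∑' n : ℕ, P (G ξ (n+1) (j:ℤ)))
      = ∑' n : ℕ, ∑' i : ℕ, P (G ξ n (i:ℤ)) * pr P ξ ((j:ℤ) - i) :=
        tsum_congr fun n => G_succ_decomp P ξ hindep hmeas hident n j
    _ = ∑' i : ℕ, ∑' n : ℕ, P (G ξ n (i:ℤ)) * pr P ξ ((j:ℤ) - i) := ENNReal.tsum_comm
    _ = ∑' i : ℕ, (∑' n : ℕ, P (G ξ n (i:ℤ))) * pr P ξ ((j:ℤ) - i) :=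
        tsum_congr fun i => ENNReal.tsum_mul_right

lemma v_eq (P : Measure Ω) [IsProbabilityMeasure P] (ξ : ℕ → Ω → ℤ)
    (hindep : iIndepFun ξ P)
    (hmeas : ∀ i, Measurable (ξ i)) (hident : ∀ i, P.map (ξ i) = P.map (ξ 0))
    (hskip : P {ω | 2 ≤ ξ 0 ω} = 0) (j : ℕ) :
    P (Ej ξ j) = (if j = 0 then pr P ξ 1 else 0)
      + ∑' i : ℕ, P (Ej ξ i) * pr P ξ ((j:ℤ) - i) := by
  have hvu : ∀ i : ℕ, P (Ej ξ i) = (∑' n : ℕ, P (G ξ n (i:ℤ))) * pr P ξ 1 := by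
    intro i
    rw [Ej_decomp P ξ hindep hmeas hident hskip i, ENNReal.tsum_mul_right]
  rw [hvu j, u_eq P ξ hindep hmeas hident j, add_mul]
  congr 1
  · split <;> simp
  · rw [← ENNReal.tsum_mul_right]
    refine tsum_congr fun i => ?_
    rw [hvu i]
    ring

theorem undershoot_and_jump_law
    {Ω : Type*} [MeasurableSpace Ω] (P : Measure Ω) [IsProbabilityMeasure P]
    (ξ : ℕ → Ω → ℤ) (hmeas : ∀ i, Measurable (ξ i))
    (hindep : iIndepFun ξ P)
    (hident : ∀ i, P.map (ξ i) = P.map (ξ 0))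
    (hint : Integrable (fun ω => ((ξ 0 ω : ℤ) : ℝ)) P)
    (hcentered : ∫ ω, ((ξ 0 ω : ℤ) : ℝ) ∂P = 0)
    (hskipfree : P {ω | 2 ≤ ξ 0 ω} = 0)
    (hup : 0 < P {ω | ξ 0 ω = 1})
    (hnotzero : P {ω | ξ 0 ω = 0} < 1)
    (S : ℕ → Ω → ℤ) (hS : ∀ n ω, S n ω = ∑ i ∈ Finset.range n, ξ i ω)
    (T : Ω → ℕ) (hT : ∀ ω, T ω = sInf {n : ℕ | S n ω < 0})
    (H L : Ω → ℤ)
    (hH : ∀ ω, H ω = -S (T ω) ω)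
    (hL : ∀ ω, L ω = S (T ω - 1) ω - S (T ω) ω) :
    ∀ k : ℤ, 1 ≤ k →
      (P {ω | H ω = k}).toReal =
        (P {ω | ξ 0 ω ≤ -k}).toReal / (P {ω | ξ 0 ω = 1}).toReal ∧
      (P {ω | L ω = k}).toReal =
        (k : ℝ) * (P {ω | ξ 0 ω = -k}).toReal / (P {ω | ξ 0 ω = 1}).toReal := by
  intro k hk
  have hS' : ∀ n ω, S n ω = ps ξ n ω := hS
  -- basic facts about pr
  have hp1pos : pr P ξ 1 ≠ 0 := by
    have : P {ω | ξ 0 ω = 1} = pr P ξ 1 := rfl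
    rw [this] at hup
    exact hup.ne'
  have hp1top : pr P ξ 1 ≠ ⊤ := measure_ne_top P _
  -- the occupation measures are all (pr 1)⁻¹
  have hv1 : ∀ j : ℕ, P (Ej ξ j) = 1 := by
    apply endgame (pr P ξ) (fun j => P (Ej ξ j))
    · exact pr_total P ξ hmeas
    · exact pr_two P ξ hskipfree
    · exact hp1pos
    · -- mean zero
      have h1 : ∀ i : ℕ, tail (pr P ξ) (-1 - (i:ℤ)) = P (ξ 0 ⁻¹' {z | z ≤ -1 - (i:ℤ)}) :=
        fun i => (tail_prob P ξ hmeas _).symm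
      calc (∑' i : ℕ, tail (pr P ξ) (-1 - (i:ℤ)))
          = ∑' i : ℕ, P (ξ 0 ⁻¹' {z | z ≤ -1 - (i:ℤ)}) := tsum_congr h1
        _ = P (ξ 0 ⁻¹' {1}) := meanzero P ξ hmeas hint hcentered hskipfree
        _ = pr P ξ 1 := rfl
    · intro j
      calc P (Ej ξ j) ≤ P Set.univ := measure_mono (Set.subset_univ _)
        _ = 1 := measure_univ
    · exact fun j j' h => measure_mono (Ej_antitone ξ h)
    · exact fun j => v_eq P ξ hindep hmeas hident hskipfree j
    · exact dichotomy P ξ hindep hmeas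
  have hu : ∀ i : ℕ, (∑' n : ℕ, P (G ξ n (i:ℤ))) = (pr P ξ 1)⁻¹ := by
    intro i
    apply ENNReal.eq_inv_of_mul_eq_one_left
    rw [← ENNReal.tsum_mul_right, ← Ej_decomp P ξ hindep hmeas hident hskipfree i]
    exact hv1 i
  -- ===== H part =====
  have hHset : {ω | H ω = k}
      = ⋃ q : ℕ × ℕ, (G ξ q.1 ((q.2:ℕ):ℤ) ∩ ξ q.1 ⁻¹' {-k - (q.2:ℤ)}) := by
    ext ω
    simp only [Set.mem_setOf_eq, Set.mem_iUnion, Set.mem_inter_iff, Set.mem_preimage,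
      Set.mem_singleton_iff, G]
    constructor
    · intro hHk
      have hne : {n : ℕ | S n ω < 0}.Nonempty := by
        by_contra hcon
        rw [Set.not_nonempty_iff_eq_empty] at hcon
        have h0 : H ω = -S 0 ω := by rw [hH ω, hT ω, hcon, Nat.sInf_empty]
        rw [hS' 0 ω, ps_zero] at h0
        omega
      have hTmem : S (T ω) ω < 0 := by
        have := Nat.sInf_mem hne
        rw [← hT ω] at this
        exact this
      have hTmin : ∀ l, l < T ω → 0 ≤ S l ω := by
        intro l hl
        by_contra hc
        have hmem : l ∈ {n : ℕ | S n ω < 0} := by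
          simp only [Set.mem_setOf_eq]; omega
        have := Nat.sInf_le hmem
        rw [← hT ω] at this
        omega
      have hTpos : 1 ≤ T ω := by
        rcases Nat.eq_zero_or_pos (T ω) with h0 | h
        · exfalso
          rw [h0, hS' 0 ω, ps_zero] at hTmem
          omega
        · exact h
      have hTm : T ω = (T ω - 1) + 1 := by omega
      set m := T ω - 1 with hm
      have hSm : 0 ≤ S m ω := hTmin m (by omega)
      have hSkeq : S (T ω) ω = -k := by
        have := hH ω
        omega
      have hsucc : S (m+1) ω = S m ω + ξ m ω := by
        rw [hS' (m+1) ω, hS' m ω]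
        exact ps_succ ξ m ω
      refine ⟨(m, (S m ω).toNat), ⟨fun l hl => ?_, ?_⟩, ?_⟩
      · rw [← hS' l ω]
        exact hTmin l (by omega)
      · rw [← hS' m ω]
        omega
      · rw [← hTm] at hsucc
        show ξ m ω = -k - ((S m ω).toNat : ℤ)
        omega
    · rintro ⟨⟨m, i⟩, ⟨⟨h0, hti⟩, hx⟩⟩
      have hx1 : ξ m ω = -k - (i:ℤ) := hx
      have hsucc : S (m+1) ω = S m ω + ξ m ω := by
        rw [hS' (m+1) ω, hS' m ω]
        exact ps_succ ξ m ω
      have hSm : S m ω = (i:ℤ) := by rw [hS' m ω]; exact hti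
      have hneg : S (m+1) ω < 0 := by omega
      have hTeq : T ω = m + 1 := by
        rw [hT ω]
        refine le_antisymm (Nat.sInf_le hneg) ?_
        refine le_csInf ⟨m+1, hneg⟩ ?_
        intro l hl
        by_contra hc
        push_neg at hc
        have hge := h0 l (by omega)
        rw [← hS' l ω] at hge
        have : S l ω < 0 := hl
        omega
      rw [hH ω, hTeq]
      omega
  have hHmeas : ∀ q : ℕ × ℕ,
      MeasurableSet (G ξ q.1 ((q.2:ℕ):ℤ) ∩ ξ q.1 ⁻¹' {-k - (q.2:ℤ)}) :=
    fun q => (meas_G ξ hmeas q.1 _).inter ((hmeas q.1) (measurableSet_singleton _))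
  have hHdisj : Pairwise (Function.onFun Disjoint
      (fun q : ℕ × ℕ => G ξ q.1 ((q.2:ℕ):ℤ) ∩ ξ q.1 ⁻¹' {-k - (q.2:ℤ)})) := by
    have key : ∀ (m i m' i' : ℕ), m < m' →
        Disjoint (G ξ m (i:ℤ) ∩ ξ m ⁻¹' {-k - (i:ℤ)}) (G ξ m' (i':ℤ) ∩ ξ m' ⁻¹' {-k - (i':ℤ)}) := by
      intro m i m' i' hlt
      refine Set.disjoint_left.mpr ?_
      rintro ω ⟨⟨h0, ht⟩, hx⟩ ⟨⟨h0', ht'⟩, hx'⟩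
      have hx1 : ξ m ω = -k - i := hx
      have hge := h0' (m+1) (by omega)
      have hs := ps_succ ξ m ω
      omega
    rintro ⟨m, i⟩ ⟨m', i'⟩ hne
    rcases lt_trichotomy m m' with h | h | h
    · exact key m i m' i' h
    · subst h
      have hii : i ≠ i' := by
        intro hii
        exact hne (by rw [hii])
      refine Set.disjoint_left.mpr ?_
      rintro ω ⟨⟨_, ht⟩, _⟩ ⟨⟨_, ht'⟩, _⟩
      apply hii
      have ht1 : ps ξ m ω = (i:ℤ) := ht
      have ht2 : ps ξ m ω = (i':ℤ) := ht'
      have : (i:ℤ) = (i':ℤ) := by omega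
      exact_mod_cast this
    · exact (key m' i' m i h).symm
  have hPH : P {ω | H ω = k} = (pr P ξ 1)⁻¹ * P (ξ 0 ⁻¹' {z | z ≤ -k}) := by
    rw [hHset, measure_iUnion hHdisj hHmeas]
    have h1 : ∀ q : ℕ × ℕ, P (G ξ q.1 ((q.2:ℕ):ℤ) ∩ ξ q.1 ⁻¹' {-k - (q.2:ℤ)})
        = P (G ξ q.1 ((q.2:ℕ):ℤ)) * pr P ξ (-k - (q.2:ℤ)) := by
      intro q
      rw [G_eq, SPLIT P ξ hindep hmeas hident, ← G_eq]
    calc (∑' q : ℕ × ℕ, P (G ξ q.1 ((q.2:ℕ):ℤ) ∩ ξ q.1 ⁻¹' {-k - (q.2:ℤ)}))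
        = ∑' q : ℕ × ℕ, P (G ξ q.1 ((q.2:ℕ):ℤ)) * pr P ξ (-k - (q.2:ℤ)) := tsum_congr h1
      _ = ∑' m : ℕ, ∑' i : ℕ, P (G ξ m (i:ℤ)) * pr P ξ (-k - (i:ℤ)) :=
          ENNReal.tsum_prod (f := fun (m : ℕ) (i : ℕ) => P (G ξ m (i:ℤ)) * pr P ξ (-k - (i:ℤ)))
      _ = ∑' i : ℕ, ∑' m : ℕ, P (G ξ m (i:ℤ)) * pr P ξ (-k - (i:ℤ)) := ENNReal.tsum_comm
      _ = ∑' i : ℕ, (∑' m : ℕ, P (G ξ m (i:ℤ))) * pr P ξ (-k - (i:ℤ)) :=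
          tsum_congr fun i => ENNReal.tsum_mul_right
      _ = ∑' i : ℕ, (pr P ξ 1)⁻¹ * pr P ξ (-k - (i:ℤ)) := by
          refine tsum_congr fun i => ?_
          rw [hu i]
      _ = (pr P ξ 1)⁻¹ * ∑' i : ℕ, pr P ξ (-k - (i:ℤ)) := ENNReal.tsum_mul_left
      _ = (pr P ξ 1)⁻¹ * P (ξ 0 ⁻¹' {z | z ≤ -k}) := by
          rw [tail_prob P ξ hmeas (-k)]
  -- ===== L part =====
  have hLset : {ω | L ω = k}
      = ⋃ q : ℕ × ℕ, (if (q.2:ℤ) < k then (G ξ q.1 ((q.2:ℕ):ℤ) ∩ ξ q.1 ⁻¹' {-k}) else ∅) := by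
    ext ω
    simp only [Set.mem_setOf_eq, Set.mem_iUnion]
    constructor
    · intro hLk
      have hne : {n : ℕ | S n ω < 0}.Nonempty := by
        by_contra hcon
        rw [Set.not_nonempty_iff_eq_empty] at hcon
        have hT0 : T ω = 0 := by rw [hT ω, hcon, Nat.sInf_empty]
        rw [hL ω, hT0] at hLk
        simp only [Nat.zero_sub] at hLk
        omega
      have hTmem : S (T ω) ω < 0 := by
        have := Nat.sInf_mem hne
        rw [← hT ω] at this
        exact this
      have hTmin : ∀ l, l < T ω → 0 ≤ S l ω := by
        intro l hl
        by_contra hc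
        have hmem : l ∈ {n : ℕ | S n ω < 0} := by
          simp only [Set.mem_setOf_eq]; omega
        have := Nat.sInf_le hmem
        rw [← hT ω] at this
        omega
      have hTpos : 1 ≤ T ω := by
        rcases Nat.eq_zero_or_pos (T ω) with h0 | h
        · exfalso
          rw [h0, hS' 0 ω, ps_zero] at hTmem
          omega
        · exact h
      have hTm : T ω = (T ω - 1) + 1 := by omega
      set m := T ω - 1 with hm
      have hSm : 0 ≤ S m ω := hTmin m (by omega)
      have hsucc : S (m+1) ω = S m ω + ξ m ω := by
        rw [hS' (m+1) ω, hS' m ω]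
        exact ps_succ ξ m ω
      rw [← hTm] at hsucc
      have hLval : L ω = S m ω - S (T ω) ω := by rw [hL ω]
      have hxm : ξ m ω = -k := by omega
      have hikl : S m ω < k := by omega
      refine ⟨(m, (S m ω).toNat), ?_⟩
      rw [if_pos (by omega : ((S m ω).toNat : ℤ) < k)]
      refine ⟨⟨fun l hl => ?_, ?_⟩, ?_⟩
      · rw [← hS' l ω]
        exact hTmin l (by omega)
      · rw [← hS' m ω]
        omega
      · exact hxm
    · rintro ⟨⟨m, i⟩, hq⟩
      by_cases hc : ((i:ℕ):ℤ) < k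
      swap
      · rw [if_neg hc] at hq
        exact absurd hq (Set.notMem_empty ω)
      rw [if_pos hc] at hq
      obtain ⟨⟨h0, hti⟩, hx⟩ := hq
      have hx1 : ξ m ω = -k := hx
      have hsucc : S (m+1) ω = S m ω + ξ m ω := by
        rw [hS' (m+1) ω, hS' m ω]
        exact ps_succ ξ m ω
      have hSm : S m ω = (i:ℤ) := by rw [hS' m ω]; exact hti
      have hneg : S (m+1) ω < 0 := by omega
      have hTeq : T ω = m + 1 := by
        rw [hT ω]
        refine le_antisymm (Nat.sInf_le hneg) ?_
        refine le_csInf ⟨m+1, hneg⟩ ?_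
        intro l hl
        by_contra hcl
        push_neg at hcl
        have hge := h0 l (by omega)
        rw [← hS' l ω] at hge
        have : S l ω < 0 := hl
        omega
      rw [hL ω, hTeq]
      simp only [Nat.add_sub_cancel]
      omega
  have hLmeas : ∀ q : ℕ × ℕ,
      MeasurableSet (if (q.2:ℤ) < k then (G ξ q.1 ((q.2:ℕ):ℤ) ∩ ξ q.1 ⁻¹' {-k}) else ∅) := by
    intro q
    split
    · exact (meas_G ξ hmeas q.1 _).inter ((hmeas q.1) (measurableSet_singleton _))
    · exact MeasurableSet.empty
  have hLdisj : Pairwise (Function.onFun Disjoint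
      (fun q : ℕ × ℕ => if (q.2:ℤ) < k then (G ξ q.1 ((q.2:ℕ):ℤ) ∩ ξ q.1 ⁻¹' {-k}) else ∅)) := by
    have key : ∀ (m i m' i' : ℕ), (i:ℤ) < k → m < m' →
        Disjoint (G ξ m (i:ℤ) ∩ ξ m ⁻¹' {-k}) (G ξ m' (i':ℤ) ∩ ξ m' ⁻¹' {-k}) := by
      intro m i m' i' hik hlt
      refine Set.disjoint_left.mpr ?_
      rintro ω ⟨⟨h0, ht⟩, hx⟩ ⟨⟨h0', ht'⟩, hx'⟩
      have hx1 : ξ m ω = -k := hx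
      have ht1 : ps ξ m ω = (i:ℤ) := ht
      have hge := h0' (m+1) (by omega)
      have hs := ps_succ ξ m ω
      omega
    rintro ⟨m, i⟩ ⟨m', i'⟩ hne
    by_cases hci : ((i:ℕ):ℤ) < k
    swap
    · simp only [Function.onFun, if_neg hci]
      exact disjoint_bot_left
    by_cases hci' : ((i':ℕ):ℤ) < k
    swap
    · simp only [Function.onFun, if_neg hci']
      exact disjoint_bot_right
    simp only [Function.onFun, if_pos hci, if_pos hci']
    rcases lt_trichotomy m m' with h | h | h
    · exact key m i m' i' hci h
    · subst h
      have hii : i ≠ i' := by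
        intro hii
        exact hne (by rw [hii])
      refine Set.disjoint_left.mpr ?_
      rintro ω ⟨⟨_, ht⟩, _⟩ ⟨⟨_, ht'⟩, _⟩
      apply hii
      have ht1 : ps ξ m ω = (i:ℤ) := ht
      have ht2 : ps ξ m ω = (i':ℤ) := ht'
      have : (i:ℤ) = (i':ℤ) := by omega
      exact_mod_cast this
    · exact (key m' i' m i hci' h).symm
  have hPL : P {ω | L ω = k} = (k.toNat : ℝ≥0∞) * ((pr P ξ 1)⁻¹ * pr P ξ (-k)) := by
    rw [hLset, measure_iUnion hLdisj hLmeas]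
    have h1 : ∀ q : ℕ × ℕ, P (if (q.2:ℤ) < k then (G ξ q.1 ((q.2:ℕ):ℤ) ∩ ξ q.1 ⁻¹' {-k}) else ∅)
        = if (q.2:ℤ) < k then P (G ξ q.1 ((q.2:ℕ):ℤ)) * pr P ξ (-k) else 0 := by
      intro q
      split
      · rw [G_eq, SPLIT P ξ hindep hmeas hident, ← G_eq]
      · exact measure_empty
    calc (∑' q : ℕ × ℕ, P (if (q.2:ℤ) < k then (G ξ q.1 ((q.2:ℕ):ℤ) ∩ ξ q.1 ⁻¹' {-k}) else ∅))
        = ∑' q : ℕ × ℕ, (if (q.2:ℤ) < k then P (G ξ q.1 ((q.2:ℕ):ℤ)) * pr P ξ (-k) else 0) :=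
          tsum_congr h1
      _ = ∑' m : ℕ, ∑' i : ℕ, (if (i:ℤ) < k then P (G ξ m (i:ℤ)) * pr P ξ (-k) else 0) :=
          ENNReal.tsum_prod (f := fun (m : ℕ) (i : ℕ) => if (i:ℤ) < k then P (G ξ m (i:ℤ)) * pr P ξ (-k) else 0)
      _ = ∑' i : ℕ, ∑' m : ℕ, (if (i:ℤ) < k then P (G ξ m (i:ℤ)) * pr P ξ (-k) else 0) :=
          ENNReal.tsum_comm
      _ = ∑' i : ℕ, (if (i:ℤ) < k then (∑' m : ℕ, P (G ξ m (i:ℤ))) * pr P ξ (-k) else 0) := by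
          refine tsum_congr fun i => ?_
          split
          · exact ENNReal.tsum_mul_right
          · simp
      _ = ∑ i ∈ Finset.range k.toNat, (if (i:ℤ) < k then (∑' m : ℕ, P (G ξ m (i:ℤ))) * pr P ξ (-k) else 0) := by
          apply tsum_eq_sum
          intro i hi
          rw [Finset.mem_range] at hi
          rw [if_neg (by omega)]
      _ = ∑ i ∈ Finset.range k.toNat, (pr P ξ 1)⁻¹ * pr P ξ (-k) := by
          refine Finset.sum_congr rfl fun i hi => ?_
          rw [Finset.mem_range] at hi
          rw [if_pos (by omega), hu i]
      _ = (k.toNat : ℝ≥0∞) * ((pr P ξ 1)⁻¹ * pr P ξ (-k)) := by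
          rw [Finset.sum_const, Finset.card_range, nsmul_eq_mul]
  -- ===== conclusion =====
  constructor
  · rw [hPH]
    have hQ : P {ω | ξ 0 ω ≤ -k} = P (ξ 0 ⁻¹' {z | z ≤ -k}) := rfl
    have hp1 : P {ω | ξ 0 ω = 1} = pr P ξ 1 := rfl
    rw [hQ, hp1, ENNReal.toReal_mul, ENNReal.toReal_inv]
    rw [div_eq_mul_inv, mul_comm]
  · rw [hPL]
    have hpk : P {ω | ξ 0 ω = -k} = pr P ξ (-k) := rfl
    have hp1 : P {ω | ξ 0 ω = 1} = pr P ξ 1 := rfl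
    rw [hpk, hp1, ENNReal.toReal_mul, ENNReal.toReal_mul, ENNReal.toReal_inv]
    have hnat : ((k.toNat : ℝ≥0∞)).toReal = (k.toNat : ℝ) := rfl
    rw [hnat]
    have hkcast : (k.toNat : ℝ) = (k : ℝ) := by
      have : ((k.toNat : ℤ) : ℝ) = (k : ℝ) := by
        congr 1
        omega
      rw [← this]
      norm_cast
    rw [hkcast]
    ring

end USJ

/-- Laws of the undershoot `H = -S_T` and of the size `L = S_{T-} - S_T` of the jump at the
first passage time `T` below `0` of a centered right-continuous (skip-free upward) random
walk: for `k ≥ 1`, `P(H = k) = P(ξ ≤ -k)/P(ξ = 1)` and `P(L = k) = k P(ξ = -k)/P(ξ = 1)`. -/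
theorem undershoot_and_jump_law
    {Ω : Type*} [MeasurableSpace Ω] (P : Measure Ω) [IsProbabilityMeasure P]
    (ξ : ℕ → Ω → ℤ) (hmeas : ∀ i, Measurable (ξ i))
    (hindep : iIndepFun ξ P)
    (hident : ∀ i, P.map (ξ i) = P.map (ξ 0))
    (hint : Integrable (fun ω => ((ξ 0 ω : ℤ) : ℝ)) P)
    (hcentered : ∫ ω, ((ξ 0 ω : ℤ) : ℝ) ∂P = 0)
    (hskipfree : P {ω | 2 ≤ ξ 0 ω} = 0)
    (hup : 0 < P {ω | ξ 0 ω = 1})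
    (hnotzero : P {ω | ξ 0 ω = 0} < 1)
    (S : ℕ → Ω → ℤ) (hS : ∀ n ω, S n ω = ∑ i ∈ Finset.range n, ξ i ω)
    (T : Ω → ℕ) (hT : ∀ ω, T ω = sInf {n : ℕ | S n ω < 0})
    (H L : Ω → ℤ)
    (hH : ∀ ω, H ω = -S (T ω) ω)
    (hL : ∀ ω, L ω = S (T ω - 1) ω - S (T ω) ω) :
    ∀ k : ℤ, 1 ≤ k →
      (P {ω | H ω = k}).toReal =
        (P {ω | ξ 0 ω ≤ -k}).toReal / (P {ω | ξ 0 ω = 1}).toReal ∧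
      (P {ω | L ω = k}).toReal =
        (k : ℝ) * (P {ω | ξ 0 ω = -k}).toReal / (P {ω | ξ 0 ω = 1}).toReal := by
  exact USJ.undershoot_and_jump_law P ξ hmeas hindep hident hint hcentered hskipfree hup
    hnotzero S hS T hT H L hH hL
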